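/- Let psi(pi_1) = (sigma_1, x_1) and psi(pi_2) = (sigma_2, x_2) under the bijection from NC_B(n) to pairs (sigma, x). If pi_1 <= pi_2 in NC_B(n) and x_2 is a block of sigma_2, then sigma_1 <= sigma_2 in NC(n) and x_1 is either: a block of sigma_1 contained in x_2; an edge (i,j) of sigma_1 with i,j in x_2; the minimal-length edge (i,j) of sigma_1 with i < min(x_2) <= max(x_2) < j if such an edge exists; or the empty set if no such edge exists. -/

import Mathlib

open Finset

/-- The ground set `{±1, …, ±n} ⊆ ℤ`. -/
noncomputable abbrev gsB (n : ℕ) : Finset ℤ := (Finset.Icc (-(n : ℤ)) (n : ℤ)).erase 0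

/-- The negative `-B` of a set of integers. -/
def negSet (B : Finset ℤ) : Finset ℤ := B.image (fun x => -x)

/-- `a` and `b` lie in a common block of the partition `P`. -/
def SameBlock {α : Type*} [DecidableEq α] {s : Finset α} (P : Finpartition s) (a b : α) : Prop :=
  ∃ B ∈ P.parts, a ∈ B ∧ b ∈ B

/-- Refinement order on partitions. -/
def Refines {α : Type*} [DecidableEq α] {s : Finset α} (P Q : Finpartition s) : Prop :=
  ∀ B ∈ P.parts, ∃ C ∈ Q.parts, B ⊆ C

/-- A partition of `{±1,…,±n}` is of type `Bₙ`: blocks come in pairs `B, -B` and there is at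
most one block with `B = -B` (the zero block). -/
def IsBPartition {n : ℕ} (P : Finpartition (gsB n)) : Prop :=
  (∀ B ∈ P.parts, negSet B ∈ P.parts) ∧
  (∀ B ∈ P.parts, ∀ C ∈ P.parts, negSet B = B → negSet C = C → B = C)

/-- The position of `x ∈ {±1,…,±n}` in the circular order `1, 2, …, n, -1, -2, …, -n`. -/
def posB (n : ℕ) (x : ℤ) : ℕ := if 0 < x then x.toNat - 1 else n + (-x).toNat - 1

/-- A type `Bₙ` partition is noncrossing: no two blocks cross in the circular representation,
i.e. there are no positions `p a < p b < p c < p d` (in the circular order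
`1,…,n,-1,…,-n`) with `a, c` in one block and `b, d` in a different one. -/
def IsNoncrossingB {n : ℕ} (P : Finpartition (gsB n)) : Prop :=
  ∀ a b c d : ℤ, posB n a < posB n b → posB n b < posB n c → posB n c < posB n d →
    SameBlock P a c → SameBlock P b d → SameBlock P a b

/-- The partition has a zero block. -/
def HasZeroBlock {n : ℕ} (P : Finpartition (gsB n)) : Prop :=
  ∃ B ∈ P.parts, negSet B = B

/-- The number of unordered pairs `(B, -B)` of nonzero blocks of `P`. -/
def nzB {n : ℕ} (P : Finpartition (gsB n)) : ℕ :=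
  (P.parts.filter fun B => negSet B ≠ B).card / 2

/-- The number of unordered pairs `(B, -B)` of nonzero blocks of `P` of size `i`. -/
def btype {n : ℕ} (P : Finpartition (gsB n)) (i : ℕ) : ℕ :=
  (P.parts.filter fun B => negSet B ≠ B ∧ B.card = i).card / 2

/-- Every block of `P` has size divisible by `k`. -/
def IsKDivisible {α : Type*} [DecidableEq α] {s : Finset α} (k : ℕ) (P : Finpartition s) : Prop :=
  ∀ B ∈ P.parts, k ∣ B.card

open scoped Classical in
/-- The block `x` of ψ(π) when `π` has a zero block: the set of positive `i` with `i ∼ -i`. -/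
noncomputable def xBlock (n : ℕ) (P : Finpartition (gsB n)) : Finset ℕ :=
  (Finset.Icc 1 n).filter (fun i => SameBlock P (i : ℤ) (-(i : ℤ)))

/-- `i` and `j` (positive) lie in a common block of the quotient partition `σ` of `π`. -/
def SameQ {n : ℕ} (P : Finpartition (gsB n)) (i j : ℕ) : Prop :=
  SameBlock P (i : ℤ) (j : ℤ) ∨ SameBlock P (i : ℤ) (-(j : ℤ))

/-- `(i, j)` is an edge of the quotient partition `σ` of `π`. -/
def IsEdgeQ {n : ℕ} (P : Finpartition (gsB n)) (i j : ℕ) : Prop :=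
  1 ≤ i ∧ j ≤ n ∧ i < j ∧ SameQ P i j ∧ ∀ m, i < m → m < j → ¬ SameQ P i m

/-- `(a, b)` is the minimal-length pair with `a ∼ -b` in `π`; by Lemma 3.2 this pair is the
edge `x` of `ψ(π) = (σ, x)` when `π` has no zero block but some block meets both signs. -/
def IsXEdge {n : ℕ} (P : Finpartition (gsB n)) (a b : ℕ) : Prop :=
  1 ≤ a ∧ b ≤ n ∧ a < b ∧ SameBlock P (a : ℤ) (-(b : ℤ)) ∧
    ∀ a' b' : ℕ, 1 ≤ a' → b' ≤ n → a' < b' → SameBlock P (a' : ℤ) (-(b' : ℤ)) →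
      b - a ≤ b' - a'

/-- The parts of the quotient noncrossing partition `σ` of `[n]` obtained from `π`. -/
def quotParts {n : ℕ} (P : Finpartition (gsB n)) : Finset (Finset ℕ) :=
  P.parts.image (fun B => B.image Int.natAbs)

lemma mem_negSet' {B : Finset ℤ} {x : ℤ} : x ∈ negSet B ↔ -x ∈ B := by
  unfold negSet
  simp only [Finset.mem_image]
  constructor
  · rintro ⟨y, hy, rfl⟩; simpa using hy
  · intro h; exact ⟨-x, h, by ring⟩

lemma posB_coe' (n m : ℕ) (hm : 1 ≤ m) : posB n (m : ℤ) = m - 1 := by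
  have h : (0:ℤ) < (m:ℤ) := by exact_mod_cast hm
  simp [posB, h]
  intro h0; omega

lemma posB_negCoe' (n m : ℕ) (hm : 1 ≤ m) : posB n (-(m : ℤ)) = n + m - 1 := by
  have h : ¬ (0:ℤ) < -(m:ℤ) := by
    simp only [not_lt, Left.neg_nonpos_iff]; exact_mod_cast Nat.zero_le m
  simp [posB, h]

/-- **Proposition 3.4 (block case).** Suppose `ψ(π₁) = (σ₁, x₁)`, `ψ(π₂) = (σ₂, x₂)`,
`π₁ ≤ π₂` in `NC_B(n)` and `x₂` is a block of `σ₂` (i.e. `π₂` has a zero block).  Then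
`σ₁ ≤ σ₂` in `NC(n)`, and `x₁` is either a block of `σ₁` contained in `x₂`, an edge `(i,j)`
of `σ₁` with `i, j ∈ x₂`, the minimal-length edge `(i,j)` of `σ₁` with
`i < min x₂ ≤ max x₂ < j` if such an edge exists, or the empty set if no such edge exists. -/
theorem stmt17 (n : ℕ) (π₁ π₂ : Finpartition (gsB n))
    (h1 : IsBPartition π₁ ∧ IsNoncrossingB π₁) (h2 : IsBPartition π₂ ∧ IsNoncrossingB π₂)
    (hle : Refines π₁ π₂) (hz2 : HasZeroBlock π₂) :
    (∀ A ∈ quotParts π₁, ∃ C ∈ quotParts π₂, A ⊆ C) ∧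
    ((HasZeroBlock π₁ ∧ xBlock n π₁ ⊆ xBlock n π₂) ∨
     (¬ HasZeroBlock π₁ ∧ ∃ a b : ℕ, IsXEdge π₁ a b ∧
        ((a ∈ xBlock n π₂ ∧ b ∈ xBlock n π₂) ∨
         ((∀ m ∈ xBlock n π₂, a < m ∧ m < b) ∧
          ∀ i j : ℕ, IsEdgeQ π₁ i j → (∀ m ∈ xBlock n π₂, i < m ∧ m < j) →
            b - a ≤ j - i))) ∨
     (¬ HasZeroBlock π₁ ∧
        (¬ ∃ a b : ℕ, 1 ≤ a ∧ b ≤ n ∧ a < b ∧ SameBlock π₁ (a : ℤ) (-(b : ℤ))) ∧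
        ¬ ∃ i j : ℕ, IsEdgeQ π₁ i j ∧ ∀ m ∈ xBlock n π₂, i < m ∧ m < j)) := by
  classical
  obtain ⟨hB1, hnc1⟩ := h1
  obtain ⟨hB2, hnc2⟩ := h2
  obtain ⟨Z, hZ, hZneg⟩ := hz2
  -- lifting SameBlock along refinement
  have lift : ∀ x y : ℤ, SameBlock π₁ x y → SameBlock π₂ x y := by
    rintro x y ⟨B, hB, hx, hy⟩
    obtain ⟨C, hC, hBC⟩ := hle B hB
    exact ⟨C, hC, hBC hx, hBC hy⟩
  have negZ : ∀ x : ℤ, x ∈ Z → -x ∈ Z := by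
    intro x hx
    have : -x ∈ negSet Z := mem_negSet'.mpr (by simpa using hx)
    rwa [hZneg] at this
  -- membership of a positive element of Z gives membership in `xBlock n π₂`
  have x_of_memZ : ∀ m : ℕ, 1 ≤ m → m ≤ n → (m : ℤ) ∈ Z → m ∈ xBlock n π₂ := by
    intro m h1 h2 hmZ
    unfold xBlock
    rw [Finset.mem_filter]
    exact ⟨Finset.mem_Icc.mpr ⟨h1, h2⟩, ⟨Z, hZ, hmZ, negZ _ hmZ⟩⟩
  have memx_bounds : ∀ m : ℕ, m ∈ xBlock n π₂ → (1 ≤ m ∧ m ≤ n) ∧ SameBlock π₂ (m : ℤ) (-(m : ℤ)) := by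
    intro m hm
    unfold xBlock at hm
    rw [Finset.mem_filter, Finset.mem_Icc] at hm
    exact hm
  have memZ_of_x : ∀ m : ℕ, m ∈ xBlock n π₂ → (m : ℤ) ∈ Z := by
    intro m hm
    obtain ⟨⟨h1, h2⟩, B, hB, hmB, hmB'⟩ := memx_bounds m hm
    have hnB : negSet B ∈ π₂.parts := hB2.1 B hB
    have hmem : -(m : ℤ) ∈ negSet B := mem_negSet'.mpr (by simpa using hmB)
    have hBeq : negSet B = B := π₂.eq_of_mem_parts hnB hB hmem hmB'
    have : B = Z := hB2.2 B hB Z hZ hBeq hZneg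
    rw [← this]; exact hmB
  -- Z meets a positive coordinate: xBlock π₂ is nonempty
  have xne : ∃ m : ℕ, m ∈ xBlock n π₂ := by
    obtain ⟨z, hz⟩ := π₂.nonempty_of_mem_parts hZ
    have hz' : z ∈ gsB n := π₂.le hZ hz
    simp only [gsB, Finset.mem_erase, Finset.mem_Icc] at hz'
    rcases lt_or_gt_of_ne hz'.1 with hneg | hpos
    · refine ⟨(-z).toNat, x_of_memZ _ (by omega) (by omega) ?_⟩
      have : ((-z).toNat : ℤ) = -z := Int.toNat_of_nonneg (by omega)
      rw [this]; exact negZ z hz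
    · refine ⟨z.toNat, x_of_memZ _ (by omega) (by omega) ?_⟩
      have : (z.toNat : ℤ) = z := Int.toNat_of_nonneg (by omega)
      rw [this]; exact hz
  -- crossing lemma α: a positive block straddling an element of Z lands in Z
  have alpha : ∀ i j m : ℕ, 1 ≤ i → j ≤ n → SameBlock π₂ (i : ℤ) (j : ℤ) →
      m ∈ xBlock n π₂ → i < m → m < j → (i : ℤ) ∈ Z := by
    intro i j m hi hj hsb hm him hmj
    obtain ⟨⟨hm1, hmn⟩, _⟩ := memx_bounds m hm
    have hmZ := memZ_of_x m hm
    have p1 : posB n (i : ℤ) < posB n (m : ℤ) := by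
      rw [posB_coe' n i hi, posB_coe' n m hm1]; omega
    have p2 : posB n (m : ℤ) < posB n (j : ℤ) := by
      rw [posB_coe' n m hm1, posB_coe' n j (by omega)]; omega
    have p3 : posB n (j : ℤ) < posB n (-(m : ℤ)) := by
      rw [posB_coe' n j (by omega), posB_negCoe' n m hm1]; omega
    have him' : SameBlock π₂ (i : ℤ) (m : ℤ) :=
      hnc2 (i : ℤ) (m : ℤ) (j : ℤ) (-(m : ℤ)) p1 p2 p3 hsb ⟨Z, hZ, hmZ, negZ _ hmZ⟩
    obtain ⟨B, hB, hiB, hmB⟩ := him'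
    have : B = Z := π₂.eq_of_mem_parts hB hZ hmB hmZ
    rw [← this]; exact hiB
  -- crossing lemma β: a mixed pair not straddling an element of Z lands in Z
  have beta : ∀ a b m : ℕ, 1 ≤ a → b ≤ n → a < b → SameBlock π₂ (a : ℤ) (-(b : ℤ)) →
      m ∈ xBlock n π₂ → ¬ (a < m ∧ m < b) → (a : ℤ) ∈ Z := by
    intro a b m ha hb hab hsb hm hnot
    obtain ⟨⟨hm1, hmn⟩, _⟩ := memx_bounds m hm
    have hmZ := memZ_of_x m hm
    rcases Nat.lt_or_ge m a with hma | hma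
    · -- m < a : cross (m, a, -m, -b)
      have p1 : posB n (m : ℤ) < posB n (a : ℤ) := by
        rw [posB_coe' n m hm1, posB_coe' n a ha]; omega
      have p2 : posB n (a : ℤ) < posB n (-(m : ℤ)) := by
        rw [posB_coe' n a ha, posB_negCoe' n m hm1]; omega
      have p3 : posB n (-(m : ℤ)) < posB n (-(b : ℤ)) := by
        rw [posB_negCoe' n m hm1, posB_negCoe' n b (by omega)]; omega
      have hma' : SameBlock π₂ (m : ℤ) (a : ℤ) :=
        hnc2 _ _ _ _ p1 p2 p3 ⟨Z, hZ, hmZ, negZ _ hmZ⟩ hsb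
      obtain ⟨B, hB, hmB, haB⟩ := hma'
      have : B = Z := π₂.eq_of_mem_parts hB hZ hmB hmZ
      rw [← this]; exact haB
    · rcases Nat.lt_or_ge m b with hmb | hmb
      · -- a ≤ m < b with ¬(a<m<b) forces m = a
        have : m = a := by omega
        rw [← this]; exact_mod_cast hmZ
      · rcases Nat.eq_or_lt_of_le hmb with hmb' | hmb'
        · -- m = b : -b ∈ Z, so the block of (a, -b) is Z
          have hbZ : -(b : ℤ) ∈ Z := by
            have : (b : ℤ) ∈ Z := by rw [hmb']; exact_mod_cast hmZ
            exact negZ _ this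
          obtain ⟨B, hB, haB, hbB⟩ := hsb
          have : B = Z := π₂.eq_of_mem_parts hB hZ hbB hbZ
          rw [← this]; exact haB
        · -- b < m : cross (a, m, -b, -m)
          have p1 : posB n (a : ℤ) < posB n (m : ℤ) := by
            rw [posB_coe' n a ha, posB_coe' n m hm1]; omega
          have p2 : posB n (m : ℤ) < posB n (-(b : ℤ)) := by
            rw [posB_coe' n m hm1, posB_negCoe' n b (by omega)]; omega
          have p3 : posB n (-(b : ℤ)) < posB n (-(m : ℤ)) := by
            rw [posB_negCoe' n b (by omega), posB_negCoe' n m hm1]; omega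
          have ham : SameBlock π₂ (a : ℤ) (m : ℤ) :=
            hnc2 _ _ _ _ p1 p2 p3 hsb ⟨Z, hZ, hmZ, negZ _ hmZ⟩
          obtain ⟨B, hB, haB, hmB⟩ := ham
          have : B = Z := π₂.eq_of_mem_parts hB hZ hmB hmZ
          rw [← this]; exact haB
  -- no positive edge of σ₁ can straddle all of xBlock π₂
  have no_straddle : ∀ i j : ℕ, 1 ≤ i → j ≤ n → SameBlock π₁ (i : ℤ) (j : ℤ) →
      ¬ (∀ m ∈ xBlock n π₂, i < m ∧ m < j) := by
    intro i j hi hj hsb hstrad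
    obtain ⟨m₀, hm₀⟩ := xne
    obtain ⟨him, hmj⟩ := hstrad m₀ hm₀
    have hiZ : (i : ℤ) ∈ Z := alpha i j m₀ hi hj (lift _ _ hsb) hm₀ him hmj
    have : i ∈ xBlock n π₂ := x_of_memZ i hi (by omega) hiZ
    exact absurd (hstrad i this).1 (lt_irrefl i)
  constructor
  · -- σ₁ ≤ σ₂
    intro A hA
    obtain ⟨B, hB, rfl⟩ := Finset.mem_image.mp hA
    obtain ⟨C, hC, hBC⟩ := hle B hB
    exact ⟨C.image Int.natAbs, Finset.mem_image_of_mem _ hC,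
      Finset.image_subset_image hBC⟩
  · by_cases hz1 : HasZeroBlock π₁
    · left
      refine ⟨hz1, fun m hm => ?_⟩
      unfold xBlock at hm ⊢
      rw [Finset.mem_filter] at hm ⊢
      exact ⟨hm.1, lift _ _ hm.2⟩
    · by_cases hmix : ∃ a b : ℕ, 1 ≤ a ∧ b ≤ n ∧ a < b ∧ SameBlock π₁ (a : ℤ) (-(b : ℤ))
      · right; left
        refine ⟨hz1, ?_⟩
        obtain ⟨a₀, b₀, ha₀, hb₀, hab₀, hsb₀⟩ := hmix
        set T : Finset (ℕ × ℕ) := (Finset.Icc 1 n ×ˢ Finset.Icc 1 n).filter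
          (fun p => p.1 < p.2 ∧ SameBlock π₁ (p.1 : ℤ) (-(p.2 : ℤ))) with hT
        have hmemT : ∀ p : ℕ × ℕ, p ∈ T ↔
            ((1 ≤ p.1 ∧ p.1 ≤ n) ∧ 1 ≤ p.2 ∧ p.2 ≤ n) ∧ p.1 < p.2 ∧
              SameBlock π₁ (p.1 : ℤ) (-(p.2 : ℤ)) := by
          intro p
          rw [hT, Finset.mem_filter, Finset.mem_product, Finset.mem_Icc, Finset.mem_Icc]
        have hTne : T.Nonempty :=
          ⟨(a₀, b₀), (hmemT _).mpr ⟨⟨⟨ha₀, by omega⟩, by omega, hb₀⟩, hab₀, hsb₀⟩⟩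
        obtain ⟨p, hpT, hpmin⟩ := T.exists_min_image (fun p => p.2 - p.1) hTne
        obtain ⟨⟨⟨ha1, han⟩, hb1, hbn⟩, hab, hsb⟩ := (hmemT p).mp hpT
        have hxedge : IsXEdge π₁ p.1 p.2 := by
          refine ⟨ha1, hbn, hab, hsb, ?_⟩
          intro a' b' ha' hb' hab' hsb'
          exact hpmin (a', b') ((hmemT _).mpr ⟨⟨⟨ha', by omega⟩, by omega, hb'⟩, hab', hsb'⟩)
        refine ⟨p.1, p.2, hxedge, ?_⟩
        have hsb2 : SameBlock π₂ (p.1 : ℤ) (-(p.2 : ℤ)) := lift _ _ hsb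
        by_cases haZ : (p.1 : ℤ) ∈ Z
        · left
          constructor
          · exact x_of_memZ _ ha1 han haZ
          · obtain ⟨B, hB, haB, hbB⟩ := hsb2
            have hBZ : B = Z := π₂.eq_of_mem_parts hB hZ haB haZ
            have hbZ : (p.2 : ℤ) ∈ Z := by
              have : -(p.2 : ℤ) ∈ Z := hBZ ▸ hbB
              have := negZ _ this
              simpa using this
            exact x_of_memZ _ hb1 hbn hbZ
        · right
          constructor
          · intro m hm
            by_contra hcon
            exact haZ (beta p.1 p.2 m ha1 hbn hab hsb2 hm hcon)
          · intro i j hij hstrad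
            obtain ⟨hi1, hjn, hijlt, hsq, _⟩ := hij
            rcases hsq with hpos | hmixij
            · exact absurd hstrad (no_straddle i j hi1 hjn hpos)
            · exact hxedge.2.2.2.2 i j hi1 hjn hijlt hmixij
      · right; right
        refine ⟨hz1, hmix, ?_⟩
        rintro ⟨i, j, hij, hstrad⟩
        obtain ⟨hi1, hjn, hijlt, hsq, _⟩ := hij
        rcases hsq with hpos | hmixij
        · exact no_straddle i j hi1 hjn hpos hstrad
        · exact hmix ⟨i, j, hi1, hjn, hijlt, hmixij⟩
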